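/- arXiv:2412.08399 — 2 statements merged into one kernel-verified Lean document; each statement's English description precedes it below -/
import Mathlib

section
/- With a_n = ⌊ωn⌋ and b_n = ⌊ω²n⌋ for ω = (1+√5)/2, the set of difference pairs {(a_{n+1} - a_n, b_{n+1} - b_n) : n ≥ 1} equals {(1,2), (2,3)}. -/
/-- The golden ratio `(1 + √5)/2`. -/
noncomputable def goldenRatio' : ℝ := (1 + Real.sqrt 5) / 2

lemma sqrt5_gt : (2 : ℝ) < Real.sqrt 5 := by
  nlinarith [Real.sq_sqrt (show (0:ℝ) ≤ 5 by norm_num), Real.sqrt_nonneg 5]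

lemma sqrt5_lt : Real.sqrt 5 < (7/3 : ℝ) := by
  nlinarith [Real.sq_sqrt (show (0:ℝ) ≤ 5 by norm_num), Real.sqrt_nonneg 5]

lemma gr_gt : (1 : ℝ) < goldenRatio' := by
  unfold goldenRatio'; linarith [sqrt5_gt]

lemma gr_lt : goldenRatio' < (2 : ℝ) := by
  unfold goldenRatio'; linarith [sqrt5_lt]

lemma gr_sq : goldenRatio' ^ 2 = goldenRatio' + 1 := by
  unfold goldenRatio'
  have := Real.sq_sqrt (show (0:ℝ) ≤ 5 by norm_num)
  nlinarith

lemma key (m : ℕ) : ⌊goldenRatio' ^ 2 * m⌋ = ⌊goldenRatio' * m⌋ + m := by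
  have : goldenRatio' ^ 2 * m = goldenRatio' * m + m := by rw [gr_sq]; ring
  rw [this, Int.floor_add_natCast]

lemma diff_bounds (x : ℝ) :
    1 ≤ ⌊goldenRatio' * (x + 1)⌋ - ⌊goldenRatio' * x⌋ ∧
    ⌊goldenRatio' * (x + 1)⌋ - ⌊goldenRatio' * x⌋ ≤ 2 := by
  have h1 : (⌊goldenRatio' * x⌋ : ℝ) ≤ goldenRatio' * x := Int.floor_le _
  have h2 : goldenRatio' * x < ⌊goldenRatio' * x⌋ + 1 := Int.lt_floor_add_one _
  have h3 : (⌊goldenRatio' * (x + 1)⌋ : ℝ) ≤ goldenRatio' * (x + 1) := Int.floor_le _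
  have h4 : goldenRatio' * (x + 1) < ⌊goldenRatio' * (x + 1)⌋ + 1 := Int.lt_floor_add_one _
  have hg1 := gr_gt
  have hg2 := gr_lt
  constructor
  · have h : (⌊goldenRatio' * x⌋ : ℝ) < ⌊goldenRatio' * (x + 1)⌋ := by nlinarith
    have : ⌊goldenRatio' * x⌋ < ⌊goldenRatio' * (x + 1)⌋ := by exact_mod_cast h
    omega
  · have h : (⌊goldenRatio' * (x + 1)⌋ : ℝ) < ⌊goldenRatio' * x⌋ + 3 := by nlinarith
    have : ⌊goldenRatio' * (x + 1)⌋ < ⌊goldenRatio' * x⌋ + 3 := by exact_mod_cast h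
    omega

theorem stmt2 :
    {p : ℤ × ℤ | ∃ n : ℕ, 1 ≤ n ∧
      p = (⌊goldenRatio' * (n + 1)⌋ - ⌊goldenRatio' * n⌋,
           ⌊goldenRatio' ^ 2 * (n + 1)⌋ - ⌊goldenRatio' ^ 2 * n⌋)} =
    {((1 : ℤ), (2 : ℤ)), (2, 3)} := by
  have h5 := Real.sq_sqrt (show (0:ℝ) ≤ 5 by norm_num)
  have hs1 := sqrt5_gt
  have hs2 := sqrt5_lt
  have f1 : ⌊goldenRatio'⌋ = 1 := by
    rw [Int.floor_eq_iff]
    unfold goldenRatio'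
    push_cast
    constructor <;> nlinarith
  have f2 : ⌊goldenRatio' * (2:ℝ)⌋ = 3 := by
    rw [Int.floor_eq_iff]
    unfold goldenRatio'
    push_cast
    constructor <;> nlinarith
  have f3 : ⌊goldenRatio' * (3:ℝ)⌋ = 4 := by
    rw [Int.floor_eq_iff]
    unfold goldenRatio'
    push_cast
    constructor <;> nlinarith
  ext p
  simp only [Set.mem_setOf_eq, Set.mem_insert_iff, Set.mem_singleton_iff]
  constructor
  · rintro ⟨n, hn, rfl⟩
    have hb := diff_bounds (n : ℝ)
    have hk1 := key n
    have hk2 := key (n + 1)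
    push_cast at hk1 hk2
    have hd : ⌊goldenRatio' * ((n : ℝ) + 1)⌋ - ⌊goldenRatio' * (n : ℝ)⌋ = 1 ∨
        ⌊goldenRatio' * ((n : ℝ) + 1)⌋ - ⌊goldenRatio' * (n : ℝ)⌋ = 2 := by omega
    rcases hd with h | h
    · left
      rw [Prod.ext_iff]
      constructor <;> simp <;> omega
    · right
      rw [Prod.ext_iff]
      constructor <;> simp <;> omega
  · rintro (rfl | rfl)
    · refine ⟨2, by norm_num, ?_⟩
      have hk1 := key 2
      have hk2 := key 3
      push_cast at hk1 hk2
      rw [Prod.ext_iff]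
      norm_num [f2, f3] at hk1 hk2 ⊢
      omega
    · refine ⟨1, le_refl _, ?_⟩
      have hk1 := key 1
      have hk2 := key 2
      push_cast at hk1 hk2
      rw [Prod.ext_iff]
      norm_num [f1, f2] at hk1 hk2 ⊢
      omega
end

section
/- Define sequences by the recursive Mex algorithm: G_0 = {(0,0,0)}; given G_n, let F_n be the set of all coordinates of elements of G_n, D_n the set of all pairwise coordinate differences x_2 - x_1, x_3 - x_2, x_3 - x_1 over (x_1,x_2,x_3) ∈ G_n, v_1(n+1) = Mex(F_n), v_2(n+1) = Mex((v_1(n+1) + D_n) ∪ {1,...,v_1(n+1)} ∪ F_n), v_3(n+1) = Mex((v_2(n+1) + D_n) ∪ {1,...,v_2(n+1)} ∪ F_n), and G_{n+1} = G_n ∪ {(v_1(n+1), v_2(n+1), v_3(n+1))}. Then for every n ≥ 1 and every i ∈ {1,2,3}, v_i(n+1) - v_i(n) ≥ i. -/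
/-- Minimum excluded value of a set of natural numbers. -/
noncomputable def mex (S : Set ℕ) : ℕ := sInf {m : ℕ | m ∉ S}

/-- Coordinates of a set of triples. -/
def coords (G : Set (ℕ × ℕ × ℕ)) : Set ℕ :=
  {k | ∃ x ∈ G, k = x.1 ∨ k = x.2.1 ∨ k = x.2.2}

/-- Pairwise coordinate differences of a set of triples. -/
def diffs (G : Set (ℕ × ℕ × ℕ)) : Set ℕ :=
  {d | ∃ x ∈ G, d = x.2.1 - x.1 ∨ d = x.2.2 - x.2.1 ∨ d = x.2.2 - x.1}

/-- One step of the Mex algorithm: the next P-position. -/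
noncomputable def step (G : Set (ℕ × ℕ × ℕ)) : ℕ × ℕ × ℕ :=
  let F := coords G
  let D := diffs G
  let a := mex F
  let b := mex ((fun d => a + d) '' D ∪ Set.Icc 1 a ∪ F)
  let c := mex ((fun d => b + d) '' D ∪ Set.Icc 1 b ∪ F)
  (a, b, c)

/-- The sets `G_n` of P-positions computed by the Mex algorithm. -/
noncomputable def Gset : ℕ → Set (ℕ × ℕ × ℕ)
  | 0 => {(0, 0, 0)}
  | n + 1 => Gset n ∪ {step (Gset n)}

/-- The `n`-th P-position `(v_1(n), v_2(n), v_3(n))`. -/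
noncomputable def v : ℕ → ℕ × ℕ × ℕ
  | 0 => (0, 0, 0)
  | n + 1 => step (Gset n)

noncomputable def v1 (n : ℕ) : ℕ := (v n).1
noncomputable def v2 (n : ℕ) : ℕ := (v n).2.1
noncomputable def v3 (n : ℕ) : ℕ := (v n).2.2

/-- `F_n`: the set of coordinates of elements of `G_n`. -/
noncomputable def Fset (n : ℕ) : Set ℕ := coords (Gset n)

/-- `D_n`: the set of pairwise coordinate differences over `G_n`. -/
noncomputable def Dset (n : ℕ) : Set ℕ := diffs (Gset n)

/-! ### mex lemmas -/

lemma mex_le {S : Set ℕ} {k : ℕ} (h : k ∉ S) : mex S ≤ k :=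
  Nat.sInf_le h

lemma mem_of_lt_mex {S : Set ℕ} {m : ℕ} (h : m < mex S) : m ∈ S := by
  by_contra hm
  exact absurd (mex_le hm) (by omega)

lemma mex_not_mem {S : Set ℕ} (h : ∃ x, x ∉ S) : mex S ∉ S :=
  Nat.sInf_mem (s := {m : ℕ | m ∉ S}) h

lemma le_mex {S : Set ℕ} {k : ℕ} (hne : ∃ x, x ∉ S) (h : ∀ m < k, m ∈ S) :
    k ≤ mex S := by
  by_contra h'
  exact mex_not_mem hne (h _ (by omega))

lemma mex_eq {S : Set ℕ} {k : ℕ} (h1 : k ∉ S) (h2 : ∀ m < k, m ∈ S) : mex S = k :=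
  le_antisymm (mex_le h1) (le_mex ⟨k, h1⟩ h2)

lemma mex_mono {S T : Set ℕ} (hne : ∃ x, x ∉ T) (h : S ⊆ T) : mex S ≤ mex T :=
  mex_le (fun hm => mex_not_mem hne (h hm))

/-! ### finiteness -/

lemma Gset_finite (n : ℕ) : (Gset n).Finite := by
  induction n with
  | zero => exact Set.finite_singleton _
  | succ n ih => exact ih.union (Set.finite_singleton _)

lemma coords_finite {G : Set (ℕ × ℕ × ℕ)} (h : G.Finite) : (coords G).Finite := by
  have hsub : coords G ⊆ (fun x : ℕ × ℕ × ℕ => x.1) '' G ∪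
      ((fun x : ℕ × ℕ × ℕ => x.2.1) '' G ∪ (fun x : ℕ × ℕ × ℕ => x.2.2) '' G) := by
    rintro k ⟨x, hx, h1 | h2 | h3⟩
    · exact Or.inl ⟨x, hx, h1.symm⟩
    · exact Or.inr (Or.inl ⟨x, hx, h2.symm⟩)
    · exact Or.inr (Or.inr ⟨x, hx, h3.symm⟩)
  exact Set.Finite.subset ((h.image _).union ((h.image _).union (h.image _))) hsub

lemma diffs_finite {G : Set (ℕ × ℕ × ℕ)} (h : G.Finite) : (diffs G).Finite := by
  have hsub : diffs G ⊆ (fun x : ℕ × ℕ × ℕ => x.2.1 - x.1) '' G ∪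
      ((fun x : ℕ × ℕ × ℕ => x.2.2 - x.2.1) '' G ∪ (fun x : ℕ × ℕ × ℕ => x.2.2 - x.1) '' G) := by
    rintro k ⟨x, hx, h1 | h2 | h3⟩
    · exact Or.inl ⟨x, hx, h1.symm⟩
    · exact Or.inr (Or.inl ⟨x, hx, h2.symm⟩)
    · exact Or.inr (Or.inr ⟨x, hx, h3.symm⟩)
  exact Set.Finite.subset ((h.image _).union ((h.image _).union (h.image _))) hsub

lemma Fset_finite (n : ℕ) : (Fset n).Finite := coords_finite (Gset_finite n)
lemma Dset_finite (n : ℕ) : (Dset n).Finite := diffs_finite (Gset_finite n)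

lemma compl_ne_of_finite {S : Set ℕ} (h : S.Finite) : ∃ x, x ∉ S := by
  obtain ⟨x, hx⟩ := h.infinite_compl.nonempty
  exact ⟨x, hx⟩

lemma Fset_ne (n : ℕ) : ∃ x, x ∉ Fset n := compl_ne_of_finite (Fset_finite n)
lemma Dset_ne (n : ℕ) : ∃ x, x ∉ Dset n := compl_ne_of_finite (Dset_finite n)

/-! ### the b- and c- candidate sets -/

noncomputable def Sb (n : ℕ) : Set ℕ :=
  (fun d => v1 (n + 1) + d) '' Dset n ∪ Set.Icc 1 (v1 (n + 1)) ∪ Fset n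

noncomputable def Sc (n : ℕ) : Set ℕ :=
  (fun d => v2 (n + 1) + d) '' Dset n ∪ Set.Icc 1 (v2 (n + 1)) ∪ Fset n

lemma v1_succ (n : ℕ) : v1 (n + 1) = mex (Fset n) := rfl
lemma v2_succ (n : ℕ) : v2 (n + 1) = mex (Sb n) := rfl
lemma v3_succ (n : ℕ) : v3 (n + 1) = mex (Sc n) := rfl

lemma Sb_ne (n : ℕ) : ∃ x, x ∉ Sb n := by
  apply compl_ne_of_finite
  exact (((Dset_finite n).image _).union (Set.finite_Icc _ _)).union (Fset_finite n)

lemma Sc_ne (n : ℕ) : ∃ x, x ∉ Sc n := by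
  apply compl_ne_of_finite
  exact (((Dset_finite n).image _).union (Set.finite_Icc _ _)).union (Fset_finite n)

/-! ### structure of Gset -/

lemma mem_Gset {p : ℕ × ℕ × ℕ} {n : ℕ} : p ∈ Gset n ↔ ∃ k, k ≤ n ∧ p = v k := by
  induction n with
  | zero =>
    constructor
    · intro h
      exact ⟨0, le_refl _, h⟩
    · rintro ⟨k, hk, rfl⟩
      have : k = 0 := by omega
      subst this; rfl
  | succ n ih =>
    constructor
    · rintro (h | h)
      · obtain ⟨k, hk, hp⟩ := ih.mp h
        exact ⟨k, by omega, hp⟩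
      · exact ⟨n + 1, le_refl _, h⟩
    · rintro ⟨k, hk, rfl⟩
      rcases Nat.lt_succ_iff_lt_or_eq.mp (Nat.lt_succ_of_le hk) with h | h
      · exact Or.inl (ih.mpr ⟨k, by omega, rfl⟩)
      · subst h
        exact Or.inr rfl

lemma v_mem_Gset {k n : ℕ} (h : k ≤ n) : v k ∈ Gset n := mem_Gset.mpr ⟨k, h, rfl⟩

lemma v1_mem_Fset {k n : ℕ} (h : k ≤ n) : v1 k ∈ Fset n :=
  ⟨v k, v_mem_Gset h, Or.inl rfl⟩
lemma v2_mem_Fset {k n : ℕ} (h : k ≤ n) : v2 k ∈ Fset n :=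
  ⟨v k, v_mem_Gset h, Or.inr (Or.inl rfl)⟩
lemma v3_mem_Fset {k n : ℕ} (h : k ≤ n) : v3 k ∈ Fset n :=
  ⟨v k, v_mem_Gset h, Or.inr (Or.inr rfl)⟩

lemma sub21_mem_Dset {k n : ℕ} (h : k ≤ n) : v2 k - v1 k ∈ Dset n :=
  ⟨v k, v_mem_Gset h, Or.inl rfl⟩
lemma sub32_mem_Dset {k n : ℕ} (h : k ≤ n) : v3 k - v2 k ∈ Dset n :=
  ⟨v k, v_mem_Gset h, Or.inr (Or.inl rfl)⟩
lemma sub31_mem_Dset {k n : ℕ} (h : k ≤ n) : v3 k - v1 k ∈ Dset n :=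
  ⟨v k, v_mem_Gset h, Or.inr (Or.inr rfl)⟩

lemma mem_Fset_elim {x n : ℕ} (h : x ∈ Fset n) :
    ∃ k, k ≤ n ∧ (x = v1 k ∨ x = v2 k ∨ x = v3 k) := by
  obtain ⟨p, hp, hx⟩ := h
  obtain ⟨k, hk, rfl⟩ := mem_Gset.mp hp
  exact ⟨k, hk, hx⟩

lemma mem_Dset_elim {d n : ℕ} (h : d ∈ Dset n) :
    ∃ k, k ≤ n ∧ (d = v2 k - v1 k ∨ d = v3 k - v2 k ∨ d = v3 k - v1 k) := by
  obtain ⟨p, hp, hx⟩ := h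
  obtain ⟨k, hk, rfl⟩ := mem_Gset.mp hp
  exact ⟨k, hk, hx⟩

lemma Fset_mono {m n : ℕ} (h : m ≤ n) : Fset m ⊆ Fset n := by
  intro x hx
  obtain ⟨k, hk, hc⟩ := mem_Fset_elim hx
  rcases hc with h1 | h1 | h1 <;> subst h1
  · exact v1_mem_Fset (hk.trans h)
  · exact v2_mem_Fset (hk.trans h)
  · exact v3_mem_Fset (hk.trans h)

lemma Dset_mono {m n : ℕ} (h : m ≤ n) : Dset m ⊆ Dset n := by
  intro x hx
  obtain ⟨k, hk, hc⟩ := mem_Dset_elim hx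
  rcases hc with h1 | h1 | h1 <;> subst h1
  · exact sub21_mem_Dset (hk.trans h)
  · exact sub32_mem_Dset (hk.trans h)
  · exact sub31_mem_Dset (hk.trans h)

lemma v_zero : v 0 = (0, 0, 0) := rfl
lemma v1_zero : v1 0 = 0 := rfl
lemma v2_zero : v2 0 = 0 := rfl
lemma v3_zero : v3 0 = 0 := rfl

lemma zero_mem_Fset (n : ℕ) : 0 ∈ Fset n := v1_mem_Fset (Nat.zero_le n)
lemma zero_mem_Dset (n : ℕ) : 0 ∈ Dset n := by
  have := sub21_mem_Dset (Nat.zero_le n)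
  simpa [v1_zero, v2_zero] using this
lemma Dset_succ_elim {d n : ℕ} (h : d ∈ Dset (n + 1)) :
    d ∈ Dset n ∨ d = v2 (n + 1) - v1 (n + 1) ∨ d = v3 (n + 1) - v2 (n + 1) ∨
      d = v3 (n + 1) - v1 (n + 1) := by
  obtain ⟨k, hk, hc⟩ := mem_Dset_elim h
  rcases Nat.lt_succ_iff_lt_or_eq.mp (Nat.lt_succ_of_le hk) with h' | h'
  · left
    rcases hc with h1 | h1 | h1 <;> subst h1
    · exact sub21_mem_Dset (by omega)
    · exact sub32_mem_Dset (by omega)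
    · exact sub31_mem_Dset (by omega)
  · subst h'
    exact Or.inr hc

/-- everything up to `v1 n` is a coordinate. -/
lemma le_v1_mem_Fset : ∀ n, ∀ m ≤ v1 n, m ∈ Fset n := by
  intro n
  induction n with
  | zero =>
    intro m hm
    have : m = 0 := by simpa [v1_zero] using hm
    subst this; exact zero_mem_Fset 0
  | succ n ih =>
    intro m hm
    rcases lt_or_eq_of_le hm with h | h
    · rw [v1_succ] at h
      exact Fset_mono (Nat.le_succ n) (mem_of_lt_mex h)
    · subst h
      exact v1_mem_Fset (le_refl _)

lemma ord_succ1 (n : ℕ) : v1 (n + 1) + 1 ≤ v2 (n + 1) := by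
  rw [v2_succ]
  apply le_mex (Sb_ne n)
  intro m hm
  rcases Nat.eq_zero_or_pos m with h | h
  · subst h
    exact Or.inr (zero_mem_Fset n)
  · exact Or.inl (Or.inr ⟨h, by omega⟩)

lemma ord_succ2 (n : ℕ) : v2 (n + 1) + 1 ≤ v3 (n + 1) := by
  rw [v3_succ]
  apply le_mex (Sc_ne n)
  intro m hm
  rcases Nat.eq_zero_or_pos m with h | h
  · subst h
    exact Or.inr (zero_mem_Fset n)
  · exact Or.inl (Or.inr ⟨h, by omega⟩)

lemma ord (k : ℕ) : v1 k ≤ v2 k ∧ v2 k ≤ v3 k := by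
  cases k with
  | zero => simp [v1_zero, v2_zero, v3_zero]
  | succ n => exact ⟨by have := ord_succ1 n; omega, by have := ord_succ2 n; omega⟩

/-! ### base case computations -/

lemma Fset_zero : Fset 0 = {0} := by
  ext x
  constructor
  · intro h
    obtain ⟨k, hk, hc⟩ := mem_Fset_elim h
    have : k = 0 := by omega
    subst this
    rcases hc with h | h | h <;> simp [h, v1_zero, v2_zero, v3_zero]
  · intro h
    simp only [Set.mem_singleton_iff] at h
    subst h
    exact zero_mem_Fset 0

lemma Dset_zero : Dset 0 = {0} := by
  ext x
  constructor
  · intro h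
    obtain ⟨k, hk, hc⟩ := mem_Dset_elim h
    have : k = 0 := by omega
    subst this
    rcases hc with h | h | h <;> simp [h, v1_zero, v2_zero, v3_zero]
  · intro h
    simp only [Set.mem_singleton_iff] at h
    subst h
    exact zero_mem_Dset 0

lemma mex_Dset_zero : mex (Dset 0) = 1 := by
  rw [Dset_zero]
  apply mex_eq (by simp)
  intro m hm
  simp [show m = 0 by omega]

lemma v1_one : v1 1 = 1 := by
  rw [v1_succ, Fset_zero]
  apply mex_eq (by simp)
  intro m hm
  simp [show m = 0 by omega]

lemma v2_one : v2 1 = 2 := by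
  have h1 : v1 (0 + 1) = 1 := v1_one
  rw [v2_succ]
  apply mex_eq
  · rintro ((⟨d, hd, hde⟩ | h) | h)
    · rw [Dset_zero] at hd
      simp only [Set.mem_singleton_iff] at hd
      subst hd
      simp only at hde
      omega
    · simp only [Set.mem_Icc] at h
      omega
    · rw [Fset_zero] at h
      simp at h
  · intro m hm
    rcases Nat.eq_zero_or_pos m with h | h
    · subst h; exact Or.inr (zero_mem_Fset 0)
    · exact Or.inl (Or.inr ⟨h, by omega⟩)

lemma v3_one : v3 1 = 3 := by
  have h2 : v2 (0 + 1) = 2 := v2_one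
  rw [v3_succ]
  apply mex_eq
  · rintro ((⟨d, hd, hde⟩ | h) | h)
    · rw [Dset_zero] at hd
      simp only [Set.mem_singleton_iff] at hd
      subst hd
      simp only at hde
      omega
    · simp only [Set.mem_Icc] at h
      omega
    · rw [Fset_zero] at h
      simp at h
  · intro m hm
    rcases Nat.eq_zero_or_pos m with h | h
    · subst h; exact Or.inr (zero_mem_Fset 0)
    · rcases Nat.lt_or_ge m 3 with h3 | h3
      · exact Or.inl (Or.inr ⟨h, by omega⟩)
      · omega

lemma mem_Dset_one {d : ℕ} : d ∈ Dset 1 ↔ d = 0 ∨ d = 1 ∨ d = 2 := by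
  constructor
  · intro h
    obtain ⟨k, hk, hc⟩ := mem_Dset_elim h
    interval_cases k
    · rcases hc with h | h | h <;> simp [h, v1_zero, v2_zero, v3_zero]
    · rcases hc with h | h | h <;> simp [h, v1_one, v2_one, v3_one]
  · rintro (h | h | h) <;> subst h
    · exact zero_mem_Dset 1
    · have := sub21_mem_Dset (n := 1) (le_refl 1)
      rwa [v1_one, v2_one] at this
    · have := sub31_mem_Dset (n := 1) (le_refl 1)
      rwa [v1_one, v3_one] at this
/-! ### the master invariant -/

def Gap2 (S : Set ℕ) : Prop := ∀ m, m ∉ S → m + 1 ∉ S ∨ m + 2 ∉ S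

def Good (n : ℕ) : Prop :=
  (v1 n + 1 ≤ v1 (n + 1)) ∧ (v2 n + 2 ≤ v2 (n + 1)) ∧ (v3 n + 3 ≤ v3 (n + 1)) ∧
  (v3 (n + 1) = v2 (n + 1) + mex (Dset n)) ∧
  (∀ e, v1 (n + 1) + e < v2 (n + 1) → e ∈ Dset n ∨ e = mex (Dset n)) ∧
  (∀ e, v1 (n + 1) + e = v2 (n + 1) → e ∉ Dset n) ∧
  Gap2 (Dset (n + 1)) ∧
  (∀ d ∈ Dset n, v1 (n + 1) + d + 2 ≤ v3 (n + 1))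

lemma Gap2_zero : Gap2 (Dset 0) := by
  intro m hm
  rw [Dset_zero] at *
  simp only [Set.mem_singleton_iff] at *
  omega

lemma good_zero : Good 0 := by
  have h1 : v1 (0 + 1) = 1 := v1_one
  have h2 : v2 (0 + 1) = 2 := v2_one
  have h3 : v3 (0 + 1) = 3 := v3_one
  have hm : mex (Dset 0) = 1 := mex_Dset_zero
  refine ⟨?_, ?_, ?_, ?_, ?_, ?_, ?_, ?_⟩
  · rw [v1_zero]; omega
  · rw [v2_zero]; omega
  · rw [v3_zero]; omega
  · omega
  · intro e he
    have : e = 0 := by omega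
    subst this
    exact Or.inl (zero_mem_Dset 0)
  · intro e he
    have : e = 1 := by omega
    subst this
    rw [Dset_zero]
    simp
  · intro m hm'
    rw [show (0:ℕ) + 1 = 1 from rfl] at *
    rw [mem_Dset_one] at hm'
    push_neg at hm'
    constructor
    rw [mem_Dset_one]
    omega
  · intro d hd
    rw [Dset_zero] at hd
    simp only [Set.mem_singleton_iff] at hd
    subst hd
    omega
lemma good_step (p : ℕ) (H : ∀ k, k ≤ p → Good k) : Good (p + 1) := by
  -- monotonicity / separation helpers
  have key : ∀ j, j ≤ p + 1 → ∀ k, k ≤ j → v2 k ≤ v2 j ∧ (k < j → v3 k + 3 ≤ v3 j) := by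
    intro j
    induction j with
    | zero =>
      intro _ k hk
      have : k = 0 := by omega
      subst this
      exact ⟨le_rfl, by omega⟩
    | succ m ihm =>
      intro hj k hk
      have hg := H m (by omega)
      have h2 := hg.2.1
      have h3 := hg.2.2.1
      rcases Nat.lt_or_ge k (m + 1) with h | h
      · have hkm : k ≤ m := by omega
        obtain ⟨a1, a2⟩ := ihm (by omega) k hkm
        refine ⟨by omega, fun _ => ?_⟩
        rcases Nat.lt_or_ge k m with h5 | h5
        · have := a2 h5; omega
        · have : k = m := by omega
          subst this; omega
      · have : k = m + 1 := by omega
        subst this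
        exact ⟨le_rfl, by omega⟩
  have hmono2 : ∀ k, k ≤ p + 1 → v2 k ≤ v2 (p + 1) := fun k hk => (key (p + 1) le_rfl k hk).1
  have hsep3 : ∀ j, j ≤ p + 1 → ∀ k, k < j → v3 k + 3 ≤ v3 j :=
    fun j hj k hk => (key j hj k (by omega)).2 hk
  -- interval invariants from earlier steps
  have hP1 : ∀ k, k ≤ p + 1 → ∀ e, e ≤ v2 k - v1 k → e ∈ Dset k := by
    intro k hk e he
    cases k with
    | zero =>
      have : e = 0 := by
        have h1 : v2 0 = 0 := v2_zero
        have h2 : v1 0 = 0 := v1_zero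
        omega
      subst this
      exact zero_mem_Dset 0
    | succ q =>
      have hg := H q (by omega)
      have hordq := ord (q + 1)
      rcases eq_or_lt_of_le he with h | h
      · rw [h]
        exact sub21_mem_Dset le_rfl
      · have hlt : v1 (q + 1) + e < v2 (q + 1) := by omega
        rcases hg.2.2.2.2.1 e hlt with h2 | h2
        · exact Dset_mono (Nat.le_succ q) h2
        · have h4 := hg.2.2.2.1
          have h5 : v3 (q + 1) - v2 (q + 1) ∈ Dset (q + 1) := sub32_mem_Dset le_rfl
          have h6 : e = v3 (q + 1) - v2 (q + 1) := by omega
          rw [h6]; exact h5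
  have hP2 : ∀ k, k ≤ p + 1 → ∀ e, e ≤ v3 k - v2 k → e ∈ Dset k := by
    intro k hk e he
    cases k with
    | zero =>
      have : e = 0 := by
        have h1 : v3 0 = 0 := v3_zero
        have h2 : v2 0 = 0 := v2_zero
        omega
      subst this
      exact zero_mem_Dset 0
    | succ q =>
      have hg := H q (by omega)
      have h4 := hg.2.2.2.1
      have hordq := ord (q + 1)
      have he' : e ≤ mex (Dset q) := by omega
      rcases eq_or_lt_of_le he' with h | h
      · have h6 : e = v3 (q + 1) - v2 (q + 1) := by omega
        rw [h6]
        exact sub32_mem_Dset le_rfl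
      · exact Dset_mono (Nat.le_succ q) (mem_of_lt_mex h)
  have hGap2 : ∀ k, k ≤ p + 1 → Gap2 (Dset k) := by
    intro k hk
    cases k with
    | zero => exact Gap2_zero
    | succ q => exact (H q (by omega)).2.2.2.2.2.2.1
  -- basic facts about A := v1 (p+2)
  have hAnotF : v1 (p + 1 + 1) ∉ Fset (p + 1) := by
    rw [v1_succ (p + 1)]
    exact mex_not_mem (Fset_ne _)
  have hAgt : ∀ k, k ≤ p + 1 → v1 k < v1 (p + 1 + 1) := by
    intro k hk
    rcases lt_trichotomy (v1 (p + 1 + 1)) (v1 k) with h | h | h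
    · exact absurd (Fset_mono hk (le_v1_mem_Fset k _ (le_of_lt h))) hAnotF
    · exact absurd (h ▸ v1_mem_Fset hk) hAnotF
    · exact h
  have goal1 : v1 (p + 1) + 1 ≤ v1 (p + 1 + 1) := hAgt (p + 1) le_rfl
  have hordn := ord (p + 1)
  -- b bound
  have goal2 : v2 (p + 1) + 2 ≤ v2 (p + 1 + 1) := by
    rw [v2_succ (p + 1)]
    apply le_mex (Sb_ne _)
    intro m hm
    rcases Nat.eq_zero_or_pos m with h0 | h0
    · subst h0
      exact Or.inr (zero_mem_Fset _)
    rcases le_or_gt m (v1 (p + 1 + 1)) with h1 | h1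
    · exact Or.inl (Or.inr ⟨h0, h1⟩)
    · have he : m - v1 (p + 1 + 1) ≤ v2 (p + 1) - v1 (p + 1) := by omega
      exact Or.inl (Or.inl ⟨m - v1 (p + 1 + 1), hP1 (p + 1) le_rfl _ he,
        show v1 (p + 1 + 1) + (m - v1 (p + 1 + 1)) = m by omega⟩)
  have hABlt : v1 (p + 1 + 1) < v2 (p + 1 + 1) := by
    have := ord_succ1 (p + 1); omega
  have hBnotSb : v2 (p + 1 + 1) ∉ Sb (p + 1) := by
    rw [v2_succ (p + 1)]
    exact mex_not_mem (Sb_ne _)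
  have hBnotF : v2 (p + 1 + 1) ∉ Fset (p + 1) := fun h => hBnotSb (Or.inr h)
  have hBim : ∀ d ∈ Dset (p + 1), v1 (p + 1 + 1) + d ≠ v2 (p + 1 + 1) := by
    intro d hd heq
    exact hBnotSb (Or.inl (Or.inl ⟨d, hd, heq⟩))
  have htpos : 1 ≤ mex (Dset (p + 1)) := by
    rcases Nat.eq_zero_or_pos (mex (Dset (p + 1))) with h | h
    · exact absurd (h ▸ zero_mem_Dset (p + 1)) (mex_not_mem (Dset_ne _))
    · exact h
  -- c = b + mex D
  have goalv : v3 (p + 1 + 1) = v2 (p + 1 + 1) + mex (Dset (p + 1)) := by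
    rw [v3_succ (p + 1)]
    apply mex_eq
    · rintro ((⟨d, hd, hde⟩ | hIc) | hF)
      · simp only at hde
        have : d = mex (Dset (p + 1)) := by omega
        exact mex_not_mem (Dset_ne _) (this ▸ hd)
      · simp only [Set.mem_Icc] at hIc
        omega
      · obtain ⟨k, hk, hc⟩ := mem_Fset_elim hF
        have hok := ord k
        rcases hc with h | h | h
        · have := hAgt k hk; omega
        · have := hmono2 k hk; omega
        · have h5 : v2 k ≤ v2 (p + 1) := hmono2 k hk
          have h6 : mex (Dset (p + 1)) ≤ v3 k - v2 k := by omega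
          exact mex_not_mem (Dset_ne _) (Dset_mono hk (hP2 k hk (mex (Dset (p + 1))) h6))
    · intro m hm
      rcases Nat.eq_zero_or_pos m with h0 | h0
      · subst h0
        exact Or.inr (zero_mem_Fset _)
      rcases le_or_gt m (v2 (p + 1 + 1)) with h1 | h1
      · exact Or.inl (Or.inr ⟨h0, h1⟩)
      · have hlt : m - v2 (p + 1 + 1) < mex (Dset (p + 1)) := by omega
        exact Or.inl (Or.inl ⟨m - v2 (p + 1 + 1), mem_of_lt_mex hlt,
          show v2 (p + 1 + 1) + (m - v2 (p + 1 + 1)) = m by omega⟩)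
  -- c bound
  have goal3 : v3 (p + 1) + 3 ≤ v3 (p + 1 + 1) := by
    rw [v3_succ (p + 1)]
    apply le_mex (Sc_ne _)
    intro m hm
    rcases Nat.eq_zero_or_pos m with h0 | h0
    · subst h0
      exact Or.inr (zero_mem_Fset _)
    rcases le_or_gt m (v2 (p + 1 + 1)) with h1 | h1
    · exact Or.inl (Or.inr ⟨h0, h1⟩)
    · have he : m - v2 (p + 1 + 1) ≤ v3 (p + 1) - v2 (p + 1) := by omega
      exact Or.inl (Or.inl ⟨m - v2 (p + 1 + 1), hP2 (p + 1) le_rfl _ he,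
        show v2 (p + 1 + 1) + (m - v2 (p + 1 + 1)) = m by omega⟩)
  -- witnesses for gaps below β
  have hwitness : ∀ e, 1 ≤ e → e ∉ Dset (p + 1) → v1 (p + 1 + 1) + e < v2 (p + 1 + 1) →
      ∃ k, k ≤ p + 1 ∧ v3 k = v1 (p + 1 + 1) + e ∧ v1 (p + 1 + 1) < v2 k := by
    intro e he1 heD hlt
    have hlt' : v1 (p + 1 + 1) + e < mex (Sb (p + 1)) := by
      rw [← v2_succ (p + 1)]; exact hlt
    rcases mem_of_lt_mex hlt' with ((⟨d, hd, hde⟩ | hIc) | hF)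
    · simp only at hde
      have : d = e := by omega
      exact absurd (this ▸ hd) heD
    · simp only [Set.mem_Icc] at hIc
      omega
    · obtain ⟨k, hk, hc⟩ := mem_Fset_elim hF
      have hok := ord k
      rcases hc with h | h | h
      · have := hAgt k hk; omega
      · have h2 : v1 k < v1 (p + 1 + 1) := hAgt k hk
        have h3 : e ≤ v2 k - v1 k := by omega
        exact absurd (Dset_mono hk (hP1 k hk e h3)) heD
      · rcases lt_trichotomy (v2 k) (v1 (p + 1 + 1)) with h4 | h4 | h4
        · have h5 : e ≤ v3 k - v2 k := by omega
          exact absurd (Dset_mono hk (hP2 k hk e h5)) heD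
        · exact absurd (h4 ▸ v2_mem_Fset hk) hAnotF
        · exact ⟨k, hk, h.symm, h4⟩
  -- gaps below β are exactly mex D
  have goalvi : ∀ e, v1 (p + 1 + 1) + e < v2 (p + 1 + 1) →
      e ∈ Dset (p + 1) ∨ e = mex (Dset (p + 1)) := by
    intro e hlt
    by_cases heD : e ∈ Dset (p + 1)
    · exact Or.inl heD
    right
    by_contra hne
    have he1 : 1 ≤ e := by
      rcases Nat.eq_zero_or_pos e with h | h
      · exact absurd (h ▸ zero_mem_Dset (p + 1)) heD
      · exact h
    have htD : mex (Dset (p + 1)) ∉ Dset (p + 1) := mex_not_mem (Dset_ne _)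
    have hte : mex (Dset (p + 1)) < e := lt_of_le_of_ne (mex_le heD) (fun h => hne h.symm)
    obtain ⟨k, hk, hk3, hk2⟩ := hwitness _ htpos htD (by omega)
    have hUne : ∃ x, x ∉ Dset (p + 1) ∪ {mex (Dset (p + 1))} :=
      compl_ne_of_finite ((Dset_finite _).union (Set.finite_singleton _))
    set t2 := mex (Dset (p + 1) ∪ {mex (Dset (p + 1))}) with ht2def
    have ht2 : t2 ∉ Dset (p + 1) ∪ {mex (Dset (p + 1))} := mex_not_mem hUne
    have ht2D : t2 ∉ Dset (p + 1) := fun h => ht2 (Or.inl h)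
    have ht2t : t2 ≠ mex (Dset (p + 1)) := fun h => ht2 (Or.inr h)
    have ht2ge : mex (Dset (p + 1)) ≤ t2 := mex_mono hUne Set.subset_union_left
    have ht2gt : mex (Dset (p + 1)) < t2 := lt_of_le_of_ne ht2ge (Ne.symm ht2t)
    have ht2e : t2 ≤ e := by
      apply mex_le
      rintro (hh | hh)
      · exact heD hh
      · simp only [Set.mem_singleton_iff] at hh
        exact hne hh
    have ht2le : t2 ≤ mex (Dset (p + 1)) + 2 := by
      rcases hGap2 (p + 1) le_rfl _ htD with h | h
      · have hnot : mex (Dset (p + 1)) + 1 ∉ Dset (p + 1) ∪ {mex (Dset (p + 1))} := by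
          rintro (hh | hh)
          · exact h hh
          · simp only [Set.mem_singleton_iff] at hh
            omega
        have := mex_le hnot
        omega
      · have hnot : mex (Dset (p + 1)) + 2 ∉ Dset (p + 1) ∪ {mex (Dset (p + 1))} := by
          rintro (hh | hh)
          · exact h hh
          · simp only [Set.mem_singleton_iff] at hh
            omega
        have := mex_le hnot
        omega
    obtain ⟨j, hj, hj3, hj2⟩ := hwitness t2 (by omega) ht2D (by omega)
    have hkj : k ≠ j := by
      intro h
      rw [h] at hk3
      omega
    rcases Nat.lt_or_ge k j with h | h
    · have := hsep3 j hj k h; omega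
    · have h' : j < k := by omega
      have := hsep3 k hk j h'; omega
  have goalvii : ∀ e, v1 (p + 1 + 1) + e = v2 (p + 1 + 1) → e ∉ Dset (p + 1) :=
    fun e he hd => hBim e hd he
  -- growth of C - A
  have hgrow : ∀ d ∈ Dset (p + 1), v1 (p + 1 + 1) + d + 2 ≤ v3 (p + 1 + 1) := by
    have hgp := H p le_rfl
    have hgpv := hgp.2.2.2.1
    have hgpvi := hgp.2.2.2.2.1
    have hgpvii := hgp.2.2.2.2.2.1
    have hgpx := hgp.2.2.2.2.2.2.2
    have hordp := ord (p + 1)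
    have hτt : mex (Dset p) < mex (Dset (p + 1)) := by
      have h1 : mex (Dset p) ≤ mex (Dset (p + 1)) :=
        mex_mono (Dset_ne _) (Dset_mono (Nat.le_succ p))
      have h2 : v3 (p + 1) - v2 (p + 1) ∈ Dset (p + 1) := sub32_mem_Dset le_rfl
      have h3 : v3 (p + 1) - v2 (p + 1) = mex (Dset p) := by omega
      have h4 := mex_not_mem (Dset_ne (p + 1))
      rcases lt_or_eq_of_le h1 with h | h
      · exact h
      · exact absurd (by rw [← h, ← h3]; exact h2) h4
    have hβt : mex (Dset (p + 1)) ≤ v2 (p + 1 + 1) - v1 (p + 1 + 1) :=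
      mex_le (goalvii _ (by omega))
    have hβpτ2 : v2 (p + 1) - v1 (p + 1) ≤ mex (Dset p) + 2 := by
      by_contra hcon
      push_neg at hcon
      have hτD : mex (Dset p) ∉ Dset p := mex_not_mem (Dset_ne p)
      rcases hGap2 p (by omega) _ hτD with h | h
      · rcases hgpvi (mex (Dset p) + 1) (by omega) with h2 | h2
        · exact h h2
        · omega
      · rcases hgpvi (mex (Dset p) + 2) (by omega) with h2 | h2
        · exact h h2
        · omega
    have hkey : (v2 (p + 1) - v1 (p + 1)) + mex (Dset p) + 2 ≤
        (v2 (p + 1 + 1) - v1 (p + 1 + 1)) + mex (Dset (p + 1)) := by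
      rcases Nat.lt_or_ge (mex (Dset p) + 1) (mex (Dset (p + 1))) with hc | hc
      · omega
      · have ht : mex (Dset (p + 1)) = mex (Dset p) + 1 := by omega
        have hβpD : v2 (p + 1) - v1 (p + 1) ∉ Dset p := hgpvii _ (by omega)
        have hβpτ : mex (Dset p) ≤ v2 (p + 1) - v1 (p + 1) := mex_le hβpD
        have hβpne : v2 (p + 1) - v1 (p + 1) ≠ mex (Dset p) + 1 := by
          intro hh
          have h2 : v2 (p + 1) - v1 (p + 1) ∈ Dset (p + 1) := sub21_mem_Dset le_rfl
          have h4 := mex_not_mem (Dset_ne (p + 1))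
          rw [hh, ← ht] at h2
          exact h4 h2
        have hβpne2 : v2 (p + 1) - v1 (p + 1) ≠ mex (Dset p) + 2 := by
          intro hh
          rcases hgpvi (mex (Dset p) + 1) (by omega) with h2 | h2
          · have h5 := mex_not_mem (Dset_ne (p + 1))
            rw [ht] at h5
            exact h5 (Dset_mono (Nat.le_succ p) h2)
          · omega
        omega
    intro d hd
    have hgoal : d + 2 ≤ (v2 (p + 1 + 1) - v1 (p + 1 + 1)) + mex (Dset (p + 1)) →
        v1 (p + 1 + 1) + d + 2 ≤ v3 (p + 1 + 1) := by
      intro h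
      omega
    apply hgoal
    rcases Dset_succ_elim hd with h | h | h | h
    · have := hgpx d h
      omega
    · omega
    · omega
    · omega
  -- gap-spacing of the new D
  have goalviii : Gap2 (Dset (p + 1 + 1)) := by
    intro m hm
    by_contra hcon
    push_neg at hcon
    obtain ⟨h1, h2⟩ := hcon
    have hordn1 := ord (p + 1 + 1)
    have hβmem : v2 (p + 1 + 1) - v1 (p + 1 + 1) ∈ Dset (p + 1 + 1) := sub21_mem_Dset le_rfl
    have htmem : v3 (p + 1 + 1) - v2 (p + 1 + 1) ∈ Dset (p + 1 + 1) := sub32_mem_Dset le_rfl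
    have hβtmem : v3 (p + 1 + 1) - v1 (p + 1 + 1) ∈ Dset (p + 1 + 1) := sub31_mem_Dset le_rfl
    have htval : v3 (p + 1 + 1) - v2 (p + 1 + 1) = mex (Dset (p + 1)) := by omega
    have hmD : m ∉ Dset (p + 1) := fun h => hm (Dset_mono (Nat.le_succ _) h)
    have hmt : m ≠ mex (Dset (p + 1)) := fun h => hm (by rw [h, ← htval]; exact htmem)
    have key1 : ∀ x, m < x → x ∈ Dset (p + 1 + 1) →
        x ∈ Dset (p + 1) ∨ x = v3 (p + 1 + 1) - v1 (p + 1 + 1) := by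
      intro x hmx hx
      rcases Dset_succ_elim hx with h | h | h | h
      · exact Or.inl h
      · exfalso
        have hmlt : v1 (p + 1 + 1) + m < v2 (p + 1 + 1) := by omega
        rcases goalvi m hmlt with h5 | h5
        · exact hmD h5
        · exact hmt h5
      · exfalso
        have : m < mex (Dset (p + 1)) := by omega
        exact hmD (mem_of_lt_mex this)
      · exact Or.inr h
    rcases key1 (m + 1) (by omega) h1 with c1 | c1 <;>
      rcases key1 (m + 2) (by omega) h2 with c2 | c2
    · rcases hGap2 (p + 1) le_rfl m hmD with h | h
      · exact h c1
      · exact h c2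
    · have := hgrow _ c1
      omega
    · have := hgrow _ c2
      omega
    · omega
  exact ⟨goal1, goal2, goal3, goalv, goalvi, goalvii, goalviii, hgrow⟩

lemma good_all : ∀ n, Good n := by
  intro n
  induction n using Nat.strong_induction_on with
  | _ n ih =>
    cases n with
    | zero => exact good_zero
    | succ p => exact good_step p (fun k hk => ih k (by omega))

theorem stmt3 : ∀ n : ℕ, 1 ≤ n →
    v1 n + 1 ≤ v1 (n + 1) ∧ v2 n + 2 ≤ v2 (n + 1) ∧ v3 n + 3 ≤ v3 (n + 1) := by
  intro n _
  obtain ⟨h1, h2, h3, _⟩ := good_all n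
  exact ⟨h1, h2, h3⟩
end
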